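/- (Balog–Szemerédi–Gowers theorem, with exponent 5.) There exist absolute constants c > 0 and C such that the following holds. Let X and Y be finite subsets of an abelian group with |X| = |Y| = n, and let α ∈ (0, 1). Suppose there is a set G ⊆ X × Y of at least α·n² pairs such that the sums {x + y : (x, y) ∈ G} take at most n distinct values. Then there exist subsets X' ⊆ X and Y' ⊆ Y with |X'| ≥ c·α·n and |Y'| ≥ c·α·n such that |X' + Y'| ≤ C · α^(−5) · n. -/

import Mathlib

open Pointwise Finset

private lemma sum_card_filter_comm' {ι κ : Type*} (s : Finset ι) (t : Finset κ)
    (r : ι → κ → Prop) [∀ i k, Decidable (r i k)] :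
    ∑ i ∈ s, (t.filter fun k => r i k).card = ∑ k ∈ t, (s.filter fun i => r i k).card := by
  simp only [Finset.card_filter]
  exact Finset.sum_comm

private lemma arith1 {a nn uu bb : ℝ} (ha0 : 0 < a) (hn : 0 < nn) (hu0 : 0 ≤ uu)
    (hb0 : 0 ≤ bb) (h : a ^ 2 * nn ^ 2 / 8 ≤ uu ^ 2 - (32 / a) * bb) :
    a * nn / 3 ≤ uu ∧ bb ≤ a * uu ^ 2 / 32 := by
  have hba : (0:ℝ) ≤ (32 / a) * bb := by positivity
  have h2 : a ^ 2 * nn ^ 2 / 8 ≤ uu ^ 2 := by linarith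
  constructor
  · nlinarith [h2, hu0, mul_pos ha0 hn]
  · have h3 : (32 / a) * bb ≤ uu ^ 2 := by nlinarith [h2, mul_pos ha0 hn]
    have h4 := mul_le_mul_of_nonneg_left h3 (by positivity : (0:ℝ) ≤ a / 32)
    calc bb = (a / 32) * ((32 / a) * bb) := by field_simp
      _ ≤ (a / 32) * uu ^ 2 := h4
      _ = a * uu ^ 2 / 32 := by ring

private lemma arith4 {a nn k : ℝ} (ha : 0 < a) (hn : 1 ≤ nn)
    (h : k * (a ^ 5 * nn ^ 2 / 12288) ≤ nn ^ 3) : k ≤ 12288 * a ^ (-5 : ℤ) * nn := by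
  have h5 : (0:ℝ) < a ^ 5 := by positivity
  have hz : a ^ (-5 : ℤ) = (a ^ 5)⁻¹ := by
    rw [zpow_neg, show ((5:ℤ)) = ((5:ℕ):ℤ) by norm_num, zpow_natCast]
  rw [hz]
  have h6 : k * a ^ 5 * nn ^ 2 ≤ 12288 * nn ^ 3 := by linarith
  have h7 : (0:ℝ) < nn ^ 2 := by positivity
  have h8 : k * a ^ 5 ≤ 12288 * nn := by nlinarith [h6, h7]
  calc k = (k * a ^ 5) * (a ^ 5)⁻¹ := by field_simp
    _ ≤ (12288 * nn) * (a ^ 5)⁻¹ := mul_le_mul_of_nonneg_right h8 (by positivity)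
    _ = 12288 * (a ^ 5)⁻¹ * nn := by ring

private lemma arith2 {a uu kk : ℝ} (ha0 : 0 < a) (hu : 0 < uu)
    (h : kk * (a * uu / 16) ≤ a * uu ^ 2 / 32) : kk ≤ uu / 2 := by
  have hpos : (0:ℝ) < a * uu / 16 := by positivity
  nlinarith [h, hpos]

set_option maxHeartbeats 1000000 in
theorem stmt_3 :
    ∃ c : ℝ, 0 < c ∧ ∃ C : ℝ, ∀ (G : Type*) [AddCommGroup G] [DecidableEq G]
      (X Y : Finset G) (n : ℕ) (α : ℝ), X.card = n → Y.card = n →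
      α ∈ Set.Ioo (0 : ℝ) 1 →
      ∀ S : Finset (G × G), S ⊆ X ×ˢ Y → α * (n : ℝ) ^ 2 ≤ (S.card : ℝ) →
        (S.image fun q => q.1 + q.2).card ≤ n →
        ∃ X' ⊆ X, ∃ Y' ⊆ Y,
          c * α * n ≤ (X'.card : ℝ) ∧ c * α * n ≤ (Y'.card : ℝ) ∧
          ((X' + Y').card : ℝ) ≤ C * α ^ (-5 : ℤ) * n := by
  classical
  refine ⟨1/6, by norm_num, 12288, ?_⟩
  intro G _ _ X Y n α hX hY hα S hSsub hScard hAcard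
  obtain ⟨hα0, hα1⟩ := hα
  rcases Nat.eq_zero_or_pos n with hn | hn
  · subst hn
    refine ⟨∅, empty_subset X, ∅, empty_subset Y, by simp, by simp, by simp⟩
  have hn0' : (0:ℝ) < n := by exact_mod_cast hn
  have hn1 : (1:ℝ) ≤ n := by exact_mod_cast hn
  set A : Finset G := S.image fun q => q.1 + q.2 with hA
  -- degrees
  set dX : G → ℕ := fun x => (Y.filter fun y => (x, y) ∈ S).card with hdX
  have hdX_le : ∀ x, (dX x : ℝ) ≤ n := by
    intro x
    have := Finset.card_filter_le Y (fun y => (x, y) ∈ S)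
    rw [hY] at this
    exact_mod_cast this
  have hS_eq : S.card = ∑ x ∈ X, dX x := by
    have hSfil : S = (X ×ˢ Y).filter (· ∈ S) := by
      ext p
      simp only [Finset.mem_filter]
      exact ⟨fun h => ⟨hSsub h, h⟩, fun h => h.2⟩
    calc S.card = ((X ×ˢ Y).filter (· ∈ S)).card := by conv_lhs => rw [hSfil]
      _ = ∑ p ∈ X ×ˢ Y, if p ∈ S then 1 else 0 := Finset.card_filter _ _
      _ = ∑ x ∈ X, ∑ y ∈ Y, if (x, y) ∈ S then 1 else 0 := by rw [Finset.sum_product]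
      _ = ∑ x ∈ X, dX x := by
          refine Finset.sum_congr rfl fun x _ => (Finset.card_filter _ _).symm
  -- high-degree vertices
  set A₁ : Finset G := X.filter fun x => α * n / 2 ≤ (dX x : ℝ) with hA₁
  have hA₁X : A₁ ⊆ X := Finset.filter_subset _ _
  have hA₁n : (A₁.card : ℝ) ≤ n := by
    have := Finset.card_le_card hA₁X
    rw [hX] at this; exact_mod_cast this
  set e₁ : ℕ := ∑ x ∈ A₁, dX x with he₁def
  have he₁ : α * n ^ 2 / 2 ≤ (e₁ : ℝ) := by
    have hsplit : ∑ x ∈ X.filter (fun x => α * n / 2 ≤ (dX x : ℝ)), dX x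
        + ∑ x ∈ X.filter (fun x => ¬ (α * n / 2 ≤ (dX x : ℝ))), dX x = ∑ x ∈ X, dX x :=
      Finset.sum_filter_add_sum_filter_not X _ dX
    have hrest : (↑(∑ x ∈ X.filter (fun x => ¬ (α * n / 2 ≤ (dX x : ℝ))), dX x) : ℝ)
        ≤ n * (α * n / 2) := by
      push_cast
      calc ∑ x ∈ X.filter (fun x => ¬ (α * n / 2 ≤ (dX x : ℝ))), (dX x : ℝ)
          ≤ ∑ _x ∈ X.filter (fun x => ¬ (α * n / 2 ≤ (dX x : ℝ))), (α * n / 2) := by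
            refine Finset.sum_le_sum fun x hx => ?_
            have := (Finset.mem_filter.mp hx).2
            linarith [lt_of_not_ge this]
        _ = (X.filter (fun x => ¬ (α * n / 2 ≤ (dX x : ℝ)))).card * (α * n / 2) := by
            rw [Finset.sum_const, nsmul_eq_mul]
        _ ≤ n * (α * n / 2) := by
            have h1 : ((X.filter (fun x => ¬ (α * n / 2 ≤ (dX x : ℝ)))).card : ℝ) ≤ n := by
              have := Finset.card_filter_le X (fun x => ¬ (α * n / 2 ≤ (dX x : ℝ)))
              rw [hX] at this; exact_mod_cast this
            have h2 : (0:ℝ) ≤ α * n / 2 := by positivity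
            exact mul_le_mul_of_nonneg_right h1 h2
    have hsplit' : e₁ + ∑ x ∈ X.filter (fun x => ¬ (α * n / 2 ≤ (dX x : ℝ))), dX x
        = S.card := by rw [hS_eq, he₁def, hA₁, ← hsplit]
    have hc : (e₁ : ℝ) + (↑(∑ x ∈ X.filter (fun x => ¬ (α * n / 2 ≤ (dX x : ℝ))), dX x) : ℝ)
        = S.card := by exact_mod_cast hsplit'
    nlinarith [hScard]
  -- neighborhoods of y inside A₁
  set U : G → Finset G := fun y => A₁.filter fun x => (x, y) ∈ S with hU
  have hUsub : ∀ y, U y ⊆ A₁ := fun y => Finset.filter_subset _ _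
  have hUn : ∀ y, ((U y).card : ℝ) ≤ n := by
    intro y
    calc ((U y).card : ℝ) ≤ (A₁.card : ℝ) := by exact_mod_cast Finset.card_le_card (hUsub y)
      _ ≤ n := hA₁n
  have hUsum : ∑ y ∈ Y, (U y).card = e₁ := by
    rw [hU, he₁def]
    exact (sum_card_filter_comm' A₁ Y (fun x y => (x, y) ∈ S)).symm
  -- codegrees and bad pairs
  set codeg : G → G → ℕ := fun x x' => (Y.filter fun y => (x, y) ∈ S ∧ (x', y) ∈ S).card
    with hcodeg
  set Bad : G → G → Prop := fun x x' => (codeg x x' : ℝ) < α ^ 3 * n / 256 with hBad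
  set BP : Finset (G × G) := (A₁ ×ˢ A₁).filter fun p => Bad p.1 p.2 with hBP
  set BC : G → ℕ := fun y => (BP.filter fun p => (p.1, y) ∈ S ∧ (p.2, y) ∈ S).card with hBC
  have hBCsum : ∑ y ∈ Y, BC y = ∑ p ∈ BP, codeg p.1 p.2 :=
    (sum_card_filter_comm' BP Y (fun p y => (p.1, y) ∈ S ∧ (p.2, y) ∈ S)).symm
  have hBCbound : (↑(∑ y ∈ Y, BC y) : ℝ) ≤ n ^ 2 * (α ^ 3 * n / 256) := by
    rw [hBCsum]
    push_cast
    calc ∑ p ∈ BP, (codeg p.1 p.2 : ℝ) ≤ ∑ _p ∈ BP, (α ^ 3 * n / 256) := by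
          refine Finset.sum_le_sum fun p hp => ?_
          have : Bad p.1 p.2 := (Finset.mem_filter.mp hp).2
          exact le_of_lt this
      _ = BP.card * (α ^ 3 * n / 256) := by rw [Finset.sum_const, nsmul_eq_mul]
      _ ≤ n ^ 2 * (α ^ 3 * n / 256) := by
          have h1 : (BP.card : ℝ) ≤ n ^ 2 := by
            have h2 : BP.card ≤ (A₁ ×ˢ A₁).card := Finset.card_filter_le _ _
            rw [Finset.card_product] at h2
            have h3 : (BP.card : ℝ) ≤ (A₁.card : ℝ) * A₁.card := by exact_mod_cast h2
            nlinarith [hA₁n, (Nat.cast_nonneg (A₁.card) : (0:ℝ) ≤ A₁.card)]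
          have h2 : (0:ℝ) ≤ α ^ 3 * n / 256 := by positivity
          exact mul_le_mul_of_nonneg_right h1 h2
  -- Cauchy–Schwarz and choice of y₀
  have hCS : (e₁ : ℝ) ^ 2 ≤ n * ∑ y ∈ Y, ((U y).card : ℝ) ^ 2 := by
    have := sq_sum_le_card_mul_sum_sq (s := Y) (f := fun y => ((U y).card : ℝ))
    rw [hY] at this
    calc (e₁ : ℝ) ^ 2 = (∑ y ∈ Y, ((U y).card : ℝ)) ^ 2 := by
          rw [← hUsum]; push_cast; ring
      _ ≤ n * ∑ y ∈ Y, ((U y).card : ℝ) ^ 2 := this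
  have hsum_sq : α ^ 2 * n ^ 3 / 4 ≤ ∑ y ∈ Y, ((U y).card : ℝ) ^ 2 := by
    have h1 : α ^ 2 * n ^ 4 / 4 ≤ (e₁ : ℝ) ^ 2 := by
      have h0 : (0:ℝ) ≤ α * n ^ 2 / 2 := by positivity
      nlinarith [he₁, h0]
    nlinarith [hCS]
  have hgsum : α ^ 2 * n ^ 3 / 8
      ≤ ∑ y ∈ Y, (((U y).card : ℝ) ^ 2 - (32 / α) * (BC y : ℝ)) := by
    rw [Finset.sum_sub_distrib]
    have h2 : (32 / α) * ∑ y ∈ Y, (BC y : ℝ) ≤ α ^ 2 * n ^ 3 / 8 := by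
      have h3 : ∑ y ∈ Y, (BC y : ℝ) ≤ n ^ 2 * (α ^ 3 * n / 256) := by
        push_cast at hBCbound; exact hBCbound
      have h4 : (32 / α) * (n ^ 2 * (α ^ 3 * n / 256)) = α ^ 2 * n ^ 3 / 8 := by
        field_simp; ring
      have h5 : (0:ℝ) < 32 / α := by positivity
      nlinarith [h3]
    rw [Finset.mul_sum] at h2
    linarith [hsum_sq]
  obtain ⟨y₀, hy₀Y, hy₀⟩ : ∃ y ∈ Y, α ^ 2 * n ^ 2 / 8
      ≤ ((U y).card : ℝ) ^ 2 - (32 / α) * (BC y : ℝ) := by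
    have hYne : Y.Nonempty := Finset.card_pos.mp (by rw [hY]; exact hn)
    refine Finset.exists_le_of_sum_le hYne ?_
    calc ∑ _y ∈ Y, α ^ 2 * n ^ 2 / 8 = n * (α ^ 2 * n ^ 2 / 8) := by
          rw [Finset.sum_const, nsmul_eq_mul, hY]
      _ = α ^ 2 * n ^ 3 / 8 := by ring
      _ ≤ _ := hgsum
  set U₀ : Finset G := U y₀ with hU₀
  set u : ℝ := (U₀.card : ℝ) with hu_def
  have hu0 : (0:ℝ) ≤ u := Nat.cast_nonneg _
  obtain ⟨hu, hbc⟩ : α * n / 3 ≤ u ∧ (BC y₀ : ℝ) ≤ α * u ^ 2 / 32 :=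
    arith1 hα0 hn0' hu0 (Nat.cast_nonneg _) hy₀
  have hu_pos : 0 < u := lt_of_lt_of_le (by positivity) hu
  -- bad partner counts within U₀
  set badp : G → ℕ := fun x => (U₀.filter fun x' => Bad x x').card with hbadp
  have hbadsum : ∑ x ∈ U₀, badp x = BC y₀ := by
    have hset : BP.filter (fun p => (p.1, y₀) ∈ S ∧ (p.2, y₀) ∈ S)
        = (U₀ ×ˢ U₀).filter fun p => Bad p.1 p.2 := by
      ext p
      simp only [hBP, hU₀, hU, Finset.mem_filter, Finset.mem_product]
      tauto
    have hbceq : BC y₀ = ((U₀ ×ˢ U₀).filter fun p => Bad p.1 p.2).card := by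
      simp only [hBC]
      rw [hset]
    rw [hbceq]
    symm
    calc ((U₀ ×ˢ U₀).filter fun p => Bad p.1 p.2).card
        = ∑ p ∈ U₀ ×ˢ U₀, if Bad p.1 p.2 then 1 else 0 := Finset.card_filter _ _
      _ = ∑ x ∈ U₀, ∑ x' ∈ U₀, if Bad x x' then 1 else 0 := by rw [Finset.sum_product]
      _ = ∑ x ∈ U₀, badp x := by
          refine Finset.sum_congr rfl fun x _ => (Finset.card_filter _ _).symm
  -- the set A'
  set A' : Finset G := U₀.filter fun x => (badp x : ℝ) < α * u / 16 with hA'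
  have hA'U : A' ⊆ U₀ := Finset.filter_subset _ _
  have hA'X : A' ⊆ X := hA'U.trans ((hUsub y₀).trans hA₁X)
  have hA'card : u / 2 ≤ (A'.card : ℝ) := by
    have hsplit := Finset.card_filter_add_card_filter_not
      (s := U₀) (p := fun x => (badp x : ℝ) < α * u / 16)
    have hKbound : ((U₀.filter fun x => ¬ ((badp x : ℝ) < α * u / 16)).card : ℝ)
        * (α * u / 16) ≤ α * u ^ 2 / 32 := by
      have h1 : ((U₀.filter fun x => ¬ ((badp x : ℝ) < α * u / 16)).card : ℝ) * (α * u / 16)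
          ≤ ∑ x ∈ U₀.filter (fun x => ¬ ((badp x : ℝ) < α * u / 16)), (badp x : ℝ) := by
        have h0 := Finset.card_nsmul_le_sum
          (U₀.filter fun x => ¬ ((badp x : ℝ) < α * u / 16))
          (fun x => (badp x : ℝ)) (α * u / 16)
          (fun x hx => not_lt.mp (Finset.mem_filter.mp hx).2)
        rw [nsmul_eq_mul] at h0
        exact h0
      have h2 : ∑ x ∈ U₀.filter (fun x => ¬ ((badp x : ℝ) < α * u / 16)), (badp x : ℝ)
          ≤ ∑ x ∈ U₀, (badp x : ℝ) :=
        Finset.sum_le_sum_of_subset_of_nonneg (Finset.filter_subset _ _)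
          (fun x _ _ => Nat.cast_nonneg _)
      have h3 : ∑ x ∈ U₀, (badp x : ℝ) = (BC y₀ : ℝ) := by
        rw [← hbadsum]; push_cast; rfl
      linarith [hbc]
    have hK : ((U₀.filter fun x => ¬ ((badp x : ℝ) < α * u / 16)).card : ℝ) ≤ u / 2 := by
      exact arith2 hα0 hu_pos hKbound
    have hcards : (A'.card : ℝ)
        + ((U₀.filter fun x => ¬ ((badp x : ℝ) < α * u / 16)).card : ℝ) = u := by
      rw [hu_def, hA']
      exact_mod_cast congrArg (Nat.cast : ℕ → ℝ) hsplit
    linarith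
  have hA'n : α * n / 6 ≤ (A'.card : ℝ) := by linarith [hA'card, hu]
  have hA'pos : (0:ℝ) < (A'.card : ℝ) := by linarith [hA'n, mul_pos hα0 hn0']
  -- the set B'
  set dA' : G → ℕ := fun y => (A'.filter fun x => (x, y) ∈ S).card with hdA'
  set B' : Finset G := Y.filter fun y => α * A'.card / 4 ≤ (dA' y : ℝ) with hB'
  have hB'Y : B' ⊆ Y := Finset.filter_subset _ _
  have hdA'sum : ∑ y ∈ Y, dA' y = ∑ x ∈ A', dX x := by
    rw [hdA', hdX]
    exact (sum_card_filter_comm' A' Y (fun x y => (x, y) ∈ S)).symm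
  have hdA'low : (A'.card : ℝ) * (α * n / 2) ≤ ∑ y ∈ Y, (dA' y : ℝ) := by
    have h1 : ∑ y ∈ Y, (dA' y : ℝ) = ∑ x ∈ A', (dX x : ℝ) := by
      exact_mod_cast congrArg (Nat.cast : ℕ → ℝ) hdA'sum
    rw [h1]
    have h2 := Finset.card_nsmul_le_sum A' (fun x => (dX x : ℝ)) (α * n / 2)
      (fun x hx => by
        have hxA₁ : x ∈ A₁ := (hUsub y₀) (hA'U hx)
        rw [hA₁] at hxA₁
        exact (Finset.mem_filter.mp hxA₁).2)
    rw [nsmul_eq_mul] at h2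
    exact h2
  have hsplitB := Finset.sum_filter_add_sum_filter_not Y
    (fun y => α * A'.card / 4 ≤ (dA' y : ℝ)) (fun y => (dA' y : ℝ))
  set Yc : Finset G := Y.filter (fun y => ¬ (α * A'.card / 4 ≤ (dA' y : ℝ))) with hYc
  have hcompl : ∑ y ∈ Yc, (dA' y : ℝ) ≤ n * (α * A'.card / 4) := by
    have h0 := Finset.sum_le_card_nsmul Yc (fun y => (dA' y : ℝ)) (α * A'.card / 4)
      (fun y hy => by
        rw [hYc] at hy
        exact le_of_lt (lt_of_not_ge (Finset.mem_filter.mp hy).2))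
    rw [nsmul_eq_mul] at h0
    have h1 : (Yc.card : ℝ) ≤ n := by
      have h2 : Yc.card ≤ Y.card := by rw [hYc]; exact Finset.card_filter_le _ _
      rw [hY] at h2; exact_mod_cast h2
    have h3 : (0:ℝ) ≤ α * A'.card / 4 :=
      div_nonneg (mul_nonneg (le_of_lt hα0) (Nat.cast_nonneg _)) (by norm_num)
    calc ∑ y ∈ Yc, (dA' y : ℝ) ≤ (Yc.card : ℝ) * (α * A'.card / 4) := h0
      _ ≤ n * (α * A'.card / 4) := mul_le_mul_of_nonneg_right h1 h3
  have hB'sum : α * n * A'.card / 4 ≤ ∑ y ∈ B', (dA' y : ℝ) := by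
    have h4 : ∑ y ∈ B', (dA' y : ℝ) + ∑ y ∈ Yc, (dA' y : ℝ) = ∑ y ∈ Y, (dA' y : ℝ) := by
      rw [hB', hYc]; exact hsplitB
    linarith [hdA'low, hcompl]
  have hB'up : ∑ y ∈ B', (dA' y : ℝ) ≤ (B'.card : ℝ) * A'.card := by
    calc ∑ y ∈ B', (dA' y : ℝ) ≤ ∑ _y ∈ B', (A'.card : ℝ) := by
          refine Finset.sum_le_sum fun y hy => ?_
          exact_mod_cast Finset.card_filter_le A' (fun x => (x, y) ∈ S)
      _ = (B'.card : ℝ) * A'.card := by rw [Finset.sum_const, nsmul_eq_mul]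
  have hB'n : α * n / 4 ≤ (B'.card : ℝ) := by
    have h1 : α * n * A'.card / 4 ≤ (B'.card : ℝ) * A'.card := le_trans hB'sum hB'up
    have h2 : (α * n / 4) * A'.card ≤ (B'.card : ℝ) * A'.card := by linarith
    exact le_of_mul_le_mul_right h2 hA'pos
  -- conclude
  have hαn_nonneg : (0:ℝ) ≤ α * n := mul_nonneg hα0.le hn0'.le
  refine ⟨A', hA'X, B', hB'Y, ?_, ?_, ?_⟩
  · calc (1/6 : ℝ) * α * n = α * n / 6 := by ring
      _ ≤ _ := hA'n
  · calc (1/6 : ℝ) * α * n ≤ α * n / 4 := by linarith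
      _ ≤ _ := hB'n
  -- the sumset bound
  set fib : G → Finset (G × G × G) :=
    fun s => (A ×ˢ A ×ˢ A).filter fun t => t.1 - t.2.1 + t.2.2 = s with hfib
  have key : ∀ s ∈ A' + B', α ^ 5 * n ^ 2 / 12288 ≤ ((fib s).card : ℝ) := by
    intro s hs
    obtain ⟨x, hx, y, hy, rfl⟩ := Finset.mem_add.mp hs
    have hxU : x ∈ U₀ := hA'U hx
    have hxbad : (badp x : ℝ) < α * u / 16 := by
      rw [hA'] at hx; exact (Finset.mem_filter.mp hx).2
    have hydA : α * A'.card / 4 ≤ (dA' y : ℝ) := by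
      rw [hB'] at hy; exact (Finset.mem_filter.mp hy).2
    set Gd : Finset G := A'.filter (fun x₁ => (x₁, y) ∈ S ∧ ¬ Bad x x₁) with hGdd
    have hGdlow : α * u / 16 ≤ (Gd.card : ℝ) := by
      have hsub : A'.filter (fun x₁ => (x₁, y) ∈ S)
          ⊆ Gd ∪ U₀.filter (fun x₁ => Bad x x₁) := by
        intro z hz
        rw [Finset.mem_filter] at hz
        by_cases hb : Bad x z
        · exact Finset.mem_union_right _ (Finset.mem_filter.mpr ⟨hA'U hz.1, hb⟩)
        · refine Finset.mem_union_left _ ?_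
          rw [hGdd]
          exact Finset.mem_filter.mpr ⟨hz.1, hz.2, hb⟩
      have hcard := Finset.card_le_card hsub
      have hcard2 := Finset.card_union_le Gd (U₀.filter (fun x₁ => Bad x x₁))
      have hnat : dA' y ≤ Gd.card + badp x := by
        rw [hdA', hbadp]
        exact le_trans hcard hcard2
      have hreal : (dA' y : ℝ) ≤ (Gd.card : ℝ) + (badp x : ℝ) := by exact_mod_cast hnat
      have h8 : α * u / 8 ≤ α * A'.card / 4 := by
        have h9 := mul_le_mul_of_nonneg_left hA'card hα0.le
        linarith
      linarith
    have hGdn : α ^ 2 * n / 48 ≤ (Gd.card : ℝ) := by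
      have h10 := mul_le_mul_of_nonneg_left hu hα0.le
      calc α ^ 2 * n / 48 = α * (α * n / 3) / 16 := by ring
        _ ≤ α * u / 16 := by linarith
        _ ≤ _ := hGdlow
    set D : Finset (Σ _ : G, G) :=
      Gd.sigma (fun x₁ => Y.filter fun y₁ => (x, y₁) ∈ S ∧ (x₁, y₁) ∈ S) with hD
    have hDcard : (Gd.card : ℝ) * (α ^ 3 * n / 256) ≤ (D.card : ℝ) := by
      rw [hD, Finset.card_sigma]
      push_cast
      have h11 := Finset.card_nsmul_le_sum Gd
        (fun x₁ => ((Y.filter fun y₁ => (x, y₁) ∈ S ∧ (x₁, y₁) ∈ S).card : ℝ))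
        (α ^ 3 * n / 256)
        (fun x₁ hx₁ => by
          rw [hGdd] at hx₁
          have hnb : ¬ Bad x x₁ := (Finset.mem_filter.mp hx₁).2.2
          simp only [hBad, hcodeg, not_lt] at hnb
          exact hnb)
      rw [nsmul_eq_mul] at h11
      exact h11
    have hDlow : α ^ 5 * n ^ 2 / 12288 ≤ (D.card : ℝ) := by
      have h12 : (0:ℝ) ≤ α ^ 3 * n / 256 := by positivity
      have h13 := mul_le_mul_of_nonneg_right hGdn h12
      calc α ^ 5 * n ^ 2 / 12288 = (α ^ 2 * n / 48) * (α ^ 3 * n / 256) := by ring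
        _ ≤ (Gd.card : ℝ) * (α ^ 3 * n / 256) := h13
        _ ≤ _ := hDcard
    have hinj : D.card ≤ (fib (x + y)).card := by
      apply Finset.card_le_card_of_injOn
        (fun p => (x + p.2, (p.1 + p.2, p.1 + y)))
      · intro p hp
        simp only [Finset.mem_coe, hD, Finset.mem_sigma] at hp
        obtain ⟨hp1, hp2⟩ := hp
        rw [hGdd, Finset.mem_filter] at hp1
        rw [Finset.mem_filter] at hp2
        simp only [Finset.mem_coe, hfib, Finset.mem_filter]
        constructor
        · rw [Finset.mem_product]
          refine ⟨?_, ?_⟩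
          · rw [hA]; exact Finset.mem_image.mpr ⟨(x, p.2), hp2.2.1, rfl⟩
          · rw [Finset.mem_product]
            constructor
            · rw [hA]; exact Finset.mem_image.mpr ⟨(p.1, p.2), hp2.2.2, rfl⟩
            · rw [hA]; exact Finset.mem_image.mpr ⟨(p.1, y), hp1.2.1, rfl⟩
        · show (x + p.2) - (p.1 + p.2) + (p.1 + y) = x + y
          abel
      · intro p _ q _ heq
        obtain ⟨p1, p2⟩ := p
        obtain ⟨q1, q2⟩ := q
        simp only [Prod.mk.injEq] at heq
        obtain ⟨h1, h2, _⟩ := heq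
        have e2 : p2 = q2 := add_left_cancel h1
        subst e2
        have e1 : p1 = q1 := add_right_cancel h2
        subst e1
        rfl
    have hfin : ((fib (x + y)).card : ℝ) ≥ α ^ 5 * n ^ 2 / 12288 := by
      calc α ^ 5 * n ^ 2 / 12288 ≤ (D.card : ℝ) := hDlow
        _ ≤ ((fib (x + y)).card : ℝ) := by exact_mod_cast hinj
    exact hfin
  -- sum the fibers
  have hsum_fib : ∑ s ∈ A' + B', (fib s).card ≤ n ^ 3 := by
    set TT : Finset (G × G × G) :=
      (A ×ˢ A ×ˢ A).filter (fun t => t.1 - t.2.1 + t.2.2 ∈ A' + B') with hTT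
    have h1 : TT.card = ∑ s ∈ A' + B',
        (TT.filter (fun t => t.1 - t.2.1 + t.2.2 = s)).card :=
      Finset.card_eq_sum_card_fiberwise (fun t ht => (Finset.mem_filter.mp ht).2)
    have h2 : ∀ s ∈ A' + B',
        TT.filter (fun t => t.1 - t.2.1 + t.2.2 = s) = fib s := by
      intro s hs
      rw [hTT, Finset.filter_filter, hfib]
      refine Finset.filter_congr fun t _ => ?_
      constructor
      · exact fun h => h.2
      · exact fun h => ⟨h ▸ hs, h⟩
    have h3 : ∑ s ∈ A' + B', (fib s).card = TT.card := by
      rw [h1]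
      exact Finset.sum_congr rfl fun s hs => by rw [h2 s hs]
    rw [h3]
    have h4 : TT.card ≤ (A ×ˢ A ×ˢ A).card := Finset.card_filter_le _ _
    have h5 : (A ×ˢ A ×ˢ A).card = A.card * (A.card * A.card) := by
      rw [Finset.card_product, Finset.card_product]
    calc TT.card ≤ A.card * (A.card * A.card) := by rw [← h5]; exact h4
      _ ≤ n * (n * n) := by
          exact Nat.mul_le_mul hAcard (Nat.mul_le_mul hAcard hAcard)
      _ = n ^ 3 := by ring
  -- combine
  have hcomb : ((A' + B').card : ℝ) * (α ^ 5 * n ^ 2 / 12288) ≤ (n : ℝ) ^ 3 := by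
    have h1 := Finset.card_nsmul_le_sum (A' + B')
      (fun s => ((fib s).card : ℝ)) (α ^ 5 * n ^ 2 / 12288) key
    rw [nsmul_eq_mul] at h1
    have h2 : ∑ s ∈ A' + B', ((fib s).card : ℝ) ≤ (n : ℝ) ^ 3 := by
      have h3 : ((∑ s ∈ A' + B', (fib s).card : ℕ) : ℝ) ≤ ((n ^ 3 : ℕ) : ℝ) := by
        exact_mod_cast hsum_fib
      push_cast at h3
      exact h3
    linarith
  exact arith4 hα0 hn1 hcomb
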